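/- arXiv:1707.04955 — 3 statements merged into one kernel-verified Lean document; each statement's English description precedes it below -/
import Mathlib

section
/- For every λ > 0, in the extended nonnegative reals: ∫_0^∞ e^{−λ s} ( ∫_{{z : ⟨1,z⟩ ≤ e^{λ s}}} ⟨1,z⟩² μ(dz) ) ds = (1/λ) ( ∫_{{⟨1,z⟩ ≤ 1}} ⟨1,z⟩² μ(dz) + ∫_{{⟨1,z⟩ > 1}} ⟨1,z⟩ μ(dz) ). In particular, the left-hand side is finite whenever ∫_{{⟨1,z⟩ ≤ 1}} ⟨1,z⟩² μ(dz) < ∞ and ∫_{{⟨1,z⟩ > 1}} ⟨1,z⟩ μ(dz) < ∞. -/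
open MeasureTheory Filter Topology
open scoped ENNReal

noncomputable section

private lemma key_exp (lam c : ℝ) (hlam : 0 < lam) :
    (∫⁻ s in Set.Ici c, ENNReal.ofReal (Real.exp (-lam * s))) =
      ENNReal.ofReal (Real.exp (-lam * c) / lam) := by
  rw [← Measure.restrict_congr_set Ioi_ae_eq_Ici]
  have hint : IntegrableOn (fun s : ℝ => Real.exp (-lam * s)) (Set.Ioi c) :=
    exp_neg_integrableOn_Ioi c hlam
  rw [← ofReal_integral_eq_lintegral_ofReal hint
      (Filter.Eventually.of_forall fun s => (Real.exp_pos _).le)]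
  congr 1
  have hderiv : ∀ x ∈ Set.Ici c,
      HasDerivAt (fun s : ℝ => -Real.exp (-lam * s) / lam) (Real.exp (-lam * x)) x := by
    intro x _
    have h := (((hasDerivAt_id x).const_mul (-lam)).exp).neg.div_const lam
    refine h.congr_deriv ?_
    simp only [id_eq, mul_one, neg_mul, neg_neg]
    field_simp
  have htend : Tendsto (fun s : ℝ => -Real.exp (-lam * s) / lam) atTop (𝓝 0) := by
    have : Tendsto (fun s : ℝ => Real.exp (-lam * s)) atTop (𝓝 0) :=
      Real.tendsto_exp_atBot.comp (tendsto_id.const_mul_atTop_of_neg (by linarith))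
    simpa using (this.neg).div_const lam
  have := integral_Ioi_of_hasDerivAt_of_tendsto' hderiv hint htend
  rw [this]
  field_simp
  ring

/-- The main identity for s-finite measures, proved by Tonelli. -/
private lemma smalljump_aux {d : ℕ} (μ : Measure (Fin d → ℝ)) [SFinite μ]
    (lam : ℝ) (hlam : 0 < lam) :
    (∫⁻ s in Set.Ici (0 : ℝ), ENNReal.ofReal (Real.exp (-lam * s)) *
        ∫⁻ z in {z : Fin d → ℝ | (∑ j, z j) ≤ Real.exp (lam * s)},
          ENNReal.ofReal ((∑ j, z j) ^ 2) ∂μ) =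
      ENNReal.ofReal (1 / lam) *
        ((∫⁻ z in {z : Fin d → ℝ | (∑ j, z j) ≤ 1}, ENNReal.ofReal ((∑ j, z j) ^ 2) ∂μ) +
          ∫⁻ z in {z : Fin d → ℝ | 1 < (∑ j, z j)}, ENNReal.ofReal (∑ j, z j) ∂μ) := by
  set a : (Fin d → ℝ) → ℝ := fun z => ∑ j, z j with ha
  have hma : Measurable a := by
    apply Finset.measurable_sum
    intro j _
    exact measurable_pi_apply j
  set f : ℝ → (Fin d → ℝ) → ℝ≥0∞ := fun s z =>
    if a z ≤ Real.exp (lam * s) then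
      ENNReal.ofReal (Real.exp (-lam * s)) * ENNReal.ofReal (a z ^ 2) else 0 with hf
  have hmf : Measurable (Function.uncurry f) := by
    apply Measurable.ite
    · exact measurableSet_le (hma.comp measurable_snd)
        ((Real.continuous_exp.measurable).comp (measurable_fst.const_mul lam))
    · exact ((Real.continuous_exp.measurable.comp
        ((measurable_fst.const_mul (-lam)))).ennreal_ofReal).mul
        (((hma.comp measurable_snd).pow_const 2).ennreal_ofReal)
    · exact measurable_const
  have step1 : (∫⁻ s in Set.Ici (0 : ℝ), ENNReal.ofReal (Real.exp (-lam * s)) *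
        ∫⁻ z in {z : Fin d → ℝ | a z ≤ Real.exp (lam * s)},
          ENNReal.ofReal (a z ^ 2) ∂μ) =
      ∫⁻ z, (∫⁻ s in Set.Ici (0 : ℝ), f s z) ∂μ := by
    have h1 : ∀ s : ℝ, ENNReal.ofReal (Real.exp (-lam * s)) *
        ∫⁻ z in {z : Fin d → ℝ | a z ≤ Real.exp (lam * s)},
          ENNReal.ofReal (a z ^ 2) ∂μ = ∫⁻ z, f s z ∂μ := by
      intro s
      rw [← lintegral_const_mul _ ((hma.pow_const 2).ennreal_ofReal),
        ← lintegral_indicator (measurableSet_le hma measurable_const)]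
      refine lintegral_congr fun z => ?_
      simp only [hf, Set.indicator_apply, Set.mem_setOf_eq]
    calc (∫⁻ s in Set.Ici (0 : ℝ), ENNReal.ofReal (Real.exp (-lam * s)) *
        ∫⁻ z in {z : Fin d → ℝ | a z ≤ Real.exp (lam * s)},
          ENNReal.ofReal (a z ^ 2) ∂μ)
        = ∫⁻ s in Set.Ici (0 : ℝ), ∫⁻ z, f s z ∂μ := by
          exact lintegral_congr fun s => h1 s
      _ = ∫⁻ z, (∫⁻ s in Set.Ici (0 : ℝ), f s z) ∂μ := by
          exact lintegral_lintegral_swap hmf.aemeasurable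
  have hme : Measurable fun s : ℝ => ENNReal.ofReal (Real.exp (-lam * s)) := by
    fun_prop
  have step2 : ∀ z, (∫⁻ s in Set.Ici (0 : ℝ), f s z) =
      ENNReal.ofReal (1 / lam) *
        (if a z ≤ 1 then ENNReal.ofReal (a z ^ 2) else ENNReal.ofReal (a z)) := by
    intro z
    by_cases h1 : a z ≤ 1
    · rw [if_pos h1]
      have : ∀ s ∈ Set.Ici (0 : ℝ), f s z =
          ENNReal.ofReal (Real.exp (-lam * s)) * ENNReal.ofReal (a z ^ 2) := by
        intro s hs
        have : a z ≤ Real.exp (lam * s) :=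
          h1.trans (Real.one_le_exp (mul_nonneg hlam.le hs))
        simp [hf, this]
      rw [setLIntegral_congr_fun_ae measurableSet_Ici (Filter.Eventually.of_forall this),
        lintegral_mul_const _ hme, key_exp lam 0 hlam]
      rw [show Real.exp (-lam * 0) / lam = 1 / lam by norm_num, mul_comm]
    · push_neg at h1
      rw [if_neg (not_le.mpr h1)]
      have ha0 : 0 < a z := lt_trans one_pos h1
      set t0 : ℝ := Real.log (a z) / lam with ht0
      have ht0pos : 0 < t0 := div_pos (Real.log_pos h1) hlam
      have hcond : ∀ s : ℝ, (a z ≤ Real.exp (lam * s)) ↔ t0 ≤ s := by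
        intro s
        rw [← Real.log_le_iff_le_exp ha0, ht0, div_le_iff₀ hlam, mul_comm]
      have heq : ∀ s ∈ Set.Ici (0 : ℝ), f s z =
          Set.indicator (Set.Ici t0)
            (fun s => ENNReal.ofReal (Real.exp (-lam * s)) * ENNReal.ofReal (a z ^ 2)) s := by
        intro s _
        by_cases hst : t0 ≤ s
        · simp [hf, (hcond s).mpr hst, Set.indicator_of_mem (Set.mem_Ici.mpr hst)]
        · have : ¬ a z ≤ Real.exp (lam * s) := fun h => hst ((hcond s).mp h)
          simp [hf, this, Set.indicator_of_notMem (fun h => hst (Set.mem_Ici.mp h))]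
      rw [setLIntegral_congr_fun_ae measurableSet_Ici (Filter.Eventually.of_forall heq),
        lintegral_indicator measurableSet_Ici,
        Measure.restrict_restrict measurableSet_Ici]
      have hinter : Set.Ici t0 ∩ Set.Ici (0 : ℝ) = Set.Ici t0 :=
        Set.inter_eq_left.mpr (Set.Ici_subset_Ici.mpr ht0pos.le)
      rw [hinter, lintegral_mul_const _ hme, key_exp lam t0 hlam]
      have hexp : Real.exp (-lam * t0) = (a z)⁻¹ := by
        rw [ht0]
        rw [show -lam * (Real.log (a z) / lam) = -Real.log (a z) by field_simp]
        rw [Real.exp_neg, Real.exp_log ha0]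
      rw [hexp, ← ENNReal.ofReal_mul (by positivity), ← ENNReal.ofReal_mul (by positivity)]
      congr 1
      field_simp
  have hsplit : MeasurableSet {z : Fin d → ℝ | a z ≤ 1} := measurableSet_le hma measurable_const
  have step3 : (∫⁻ z, (if a z ≤ 1 then ENNReal.ofReal (a z ^ 2) else ENNReal.ofReal (a z)) ∂μ) =
      (∫⁻ z in {z : Fin d → ℝ | a z ≤ 1}, ENNReal.ofReal (a z ^ 2) ∂μ) +
        ∫⁻ z in {z : Fin d → ℝ | 1 < a z}, ENNReal.ofReal (a z) ∂μ := by
    rw [← lintegral_add_compl _ hsplit]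
    congr 1
    · refine setLIntegral_congr_fun_ae hsplit (Filter.Eventually.of_forall fun z hz => ?_)
      simp [Set.mem_setOf_eq.mp hz]
    · have hc : {z : Fin d → ℝ | a z ≤ 1}ᶜ = {z : Fin d → ℝ | 1 < a z} := by
        ext z; simp [not_le]
      rw [hc]
      refine setLIntegral_congr_fun_ae (hc ▸ hsplit.compl)
        (Filter.Eventually.of_forall fun z hz => ?_)
      simp [not_le.mpr (Set.mem_setOf_eq.mp hz)]
  rw [step1, lintegral_congr step2,
    lintegral_const_mul _ (Measurable.ite hsplit (hma.pow_const 2).ennreal_ofReal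
      hma.ennreal_ofReal), step3]

/-- **Small-jump integral computation (Kyprianou–Palau–Ren, Section 2.1).** For a measure `μ`
carried by `ℝ₊^d` and `λ > 0`,
`∫_0^∞ e^{-λs} ∫_{⟨1,z⟩ ≤ e^{λs}} ⟨1,z⟩² μ(dz) ds
  = (1/λ)(∫_{⟨1,z⟩ ≤ 1} ⟨1,z⟩² μ(dz) + ∫_{⟨1,z⟩ > 1} ⟨1,z⟩ μ(dz))` in `[0,∞]`. -/
theorem smalljump_integral_eq
    {d : ℕ} (hd : 0 < d) (μ : Measure (Fin d → ℝ))
    (hμ : μ {z | ¬ ∀ i, 0 ≤ z i} = 0)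
    (lam : ℝ) (hlam : 0 < lam) :
    (∫⁻ s in Set.Ici (0 : ℝ), ENNReal.ofReal (Real.exp (-lam * s)) *
        ∫⁻ z in {z : Fin d → ℝ | (∑ j, z j) ≤ Real.exp (lam * s)},
          ENNReal.ofReal ((∑ j, z j) ^ 2) ∂μ) =
      ENNReal.ofReal (1 / lam) *
        ((∫⁻ z in {z : Fin d → ℝ | (∑ j, z j) ≤ 1}, ENNReal.ofReal ((∑ j, z j) ^ 2) ∂μ) +
          ∫⁻ z in {z : Fin d → ℝ | 1 < (∑ j, z j)}, ENNReal.ofReal (∑ j, z j) ∂μ) ∧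
    (((∫⁻ z in {z : Fin d → ℝ | (∑ j, z j) ≤ 1}, ENNReal.ofReal ((∑ j, z j) ^ 2) ∂μ) < ⊤ ∧
        (∫⁻ z in {z : Fin d → ℝ | 1 < (∑ j, z j)}, ENNReal.ofReal (∑ j, z j) ∂μ) < ⊤) →
      (∫⁻ s in Set.Ici (0 : ℝ), ENNReal.ofReal (Real.exp (-lam * s)) *
        ∫⁻ z in {z : Fin d → ℝ | (∑ j, z j) ≤ Real.exp (lam * s)},
          ENNReal.ofReal ((∑ j, z j) ^ 2) ∂μ) < ⊤) := by
  set a : (Fin d → ℝ) → ℝ := fun z => ∑ j, z j with ha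
  have hma : Measurable a := by
    apply Finset.measurable_sum
    intro j _
    exact measurable_pi_apply j
  set S1 : Set (Fin d → ℝ) := {z | a z ≤ 1} with hS1def
  set S2 : Set (Fin d → ℝ) := {z | 1 < a z} with hS2def
  have hS1 : MeasurableSet S1 := measurableSet_le hma measurable_const
  have hS2 : MeasurableSet S2 := measurableSet_lt measurable_const hma
  have hcompl : S1ᶜ = S2 := by ext z; simp [hS1def, hS2def, not_le]
  set A : ℝ≥0∞ := ∫⁻ z in S1, ENNReal.ofReal (a z ^ 2) ∂μ with hA
  set B : ℝ≥0∞ := ∫⁻ z in S2, ENNReal.ofReal (a z) ∂μ with hB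
  set L : ℝ≥0∞ := ∫⁻ s in Set.Ici (0 : ℝ), ENNReal.ofReal (Real.exp (-lam * s)) *
      ∫⁻ z in {z : Fin d → ℝ | a z ≤ Real.exp (lam * s)},
        ENNReal.ofReal (a z ^ 2) ∂μ with hL
  have hme : Measurable fun s : ℝ => ENNReal.ofReal (Real.exp (-lam * s)) := by fun_prop
  have hofReal1 : ENNReal.ofReal (Real.exp (-lam * 0) / lam) = ENNReal.ofReal (1 / lam) := by
    norm_num
  -- main identity
  have main : L = ENNReal.ofReal (1 / lam) * (A + B) := by
    by_cases hBfin : B = ⊤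
    · -- infinite case: show L = ⊤
      rw [hBfin, add_top, ENNReal.mul_top
        (ENNReal.ofReal_pos.mpr (by positivity : (0:ℝ) < 1 / lam)).ne']
      rw [eq_top_iff]
      -- truncations
      set Bn : ℕ → ℝ≥0∞ := fun n =>
        ∫⁻ z in S2 ∩ {z | a z ≤ (n : ℝ)}, ENNReal.ofReal (a z) ∂μ with hBn
      have hSn : ∀ n : ℕ, MeasurableSet {z : Fin d → ℝ | a z ≤ (n : ℝ)} := fun n =>
        measurableSet_le hma measurable_const
      have hsup : (⨆ n, Bn n) = B := by
        have hrr : ∀ n : ℕ, Bn n =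
            ∫⁻ z, Set.indicator {z | a z ≤ (n : ℝ)}
              (fun z => ENNReal.ofReal (a z)) z ∂(μ.restrict S2) := by
          intro n
          rw [lintegral_indicator (hSn n), Measure.restrict_restrict (hSn n), Set.inter_comm]
        rw [funext hrr, ← lintegral_iSup]
        · refine lintegral_congr fun z => ?_
          obtain ⟨n, hn⟩ := exists_nat_ge (a z)
          refine le_antisymm (iSup_le fun m => Set.indicator_le_self _ _ _) ?_
          have hmem : z ∈ {w : Fin d → ℝ | a w ≤ (n : ℝ)} := hn
          have heqz : Set.indicator {w : Fin d → ℝ | a w ≤ (n : ℝ)}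
              (fun w => ENNReal.ofReal (a w)) z = ENNReal.ofReal (a z) :=
            Set.indicator_of_mem hmem _
          rw [← heqz]
          exact le_iSup (fun m : ℕ => Set.indicator {w : Fin d → ℝ | a w ≤ (m : ℝ)}
            (fun w => ENNReal.ofReal (a w)) z) n
        · exact fun n => (hma.ennreal_ofReal).indicator (hSn n)
        · intro n m hnm z
          refine Set.indicator_le_indicator_of_subset ?_ (fun _ => zero_le) z
          intro w hw
          have hc : (n : ℝ) ≤ (m : ℝ) := by exact_mod_cast hnm
          exact le_trans hw hc
      by_cases hfin : ∀ n : ℕ, Bn n < ⊤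
      · -- all truncations finite: use the aux lemma on finite truncated measures
        have key : ∀ n : ℕ, ENNReal.ofReal (1 / lam) * Bn n ≤ L := by
          intro n
          set ν : Measure (Fin d → ℝ) := μ.restrict (S2 ∩ {z | a z ≤ (n : ℝ)}) with hν
          have hνfin : IsFiniteMeasure ν := by
            constructor
            rw [hν, Measure.restrict_apply_univ, ← setLIntegral_one]
            calc (∫⁻ _ in S2 ∩ {z | a z ≤ (n:ℝ)}, 1 ∂μ)
                ≤ ∫⁻ z in S2 ∩ {z | a z ≤ (n:ℝ)}, ENNReal.ofReal (a z) ∂μ := by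
                  refine setLIntegral_mono hma.ennreal_ofReal fun z hz => ?_
                  exact ENNReal.one_le_ofReal.mpr hz.1.le
              _ < ⊤ := hfin n
          have := smalljump_aux ν lam hlam
          have hAν : (∫⁻ z in {z : Fin d → ℝ | (∑ j, z j) ≤ 1},
              ENNReal.ofReal ((∑ j, z j) ^ 2) ∂ν) = 0 := by
            rw [hν, Measure.restrict_restrict hS1]
            have : S1 ∩ (S2 ∩ {z | a z ≤ (n:ℝ)}) = ∅ := by
              ext z
              simp only [hS1def, hS2def, Set.mem_inter_iff, Set.mem_setOf_eq,
                Set.mem_empty_iff_false, iff_false, not_and]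
              intro h1 h2
              linarith
            rw [this]
            simp
          have hBν : (∫⁻ z in {z : Fin d → ℝ | 1 < (∑ j, z j)},
              ENNReal.ofReal (∑ j, z j) ∂ν) = Bn n := by
            rw [hν, Measure.restrict_restrict hS2, ← Set.inter_assoc, Set.inter_self]
          rw [hAν, hBν, zero_add] at this
          rw [← this]
          refine lintegral_mono fun s => ?_
          refine mul_le_mul_right ?_ _
          exact lintegral_mono' (Measure.restrict_mono (subset_refl _)
            Measure.restrict_le_self) (le_refl _)
        calc (⊤ : ℝ≥0∞) = ENNReal.ofReal (1 / lam) * ⊤ := by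
              rw [ENNReal.mul_top (ENNReal.ofReal_pos.mpr (by positivity)).ne']
          _ = ENNReal.ofReal (1 / lam) * ⨆ n, Bn n := by rw [hsup, hBfin]
          _ = ⨆ n, ENNReal.ofReal (1 / lam) * Bn n := by rw [ENNReal.mul_iSup]
          _ ≤ L := iSup_le key
      · -- some truncation infinite: inner integral is infinite for large s
        push_neg at hfin
        obtain ⟨n, hn⟩ := hfin
        have hBnn : Bn n = ⊤ := top_le_iff.mp hn
        have hn1 : (1 : ℝ) ≤ (n : ℝ) := by
          by_contra hcon
          push_neg at hcon
          have : S2 ∩ {z | a z ≤ (n : ℝ)} = ∅ := by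
            ext z
            simp only [hS2def, Set.mem_inter_iff, Set.mem_setOf_eq,
              Set.mem_empty_iff_false, iff_false, not_and]
            intro h1
            push_neg
            linarith
          rw [hBn] at hBnn
          simp only [this] at hBnn
          simp at hBnn
        set sn : ℝ := Real.log (n : ℝ) / lam with hsn
        have hsn0 : 0 ≤ sn := div_nonneg (Real.log_nonneg hn1) hlam.le
        have hinner : ∀ s ∈ Set.Ici sn,
            (∫⁻ z in {z : Fin d → ℝ | a z ≤ Real.exp (lam * s)},
              ENNReal.ofReal (a z ^ 2) ∂μ) = ⊤ := by
          intro s hs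
          rw [eq_top_iff]
          have hsub : S2 ∩ {z | a z ≤ (n : ℝ)} ⊆ {z | a z ≤ Real.exp (lam * s)} := by
            intro z hz
            have hs' : Real.log (n : ℝ) / lam ≤ s := hs
            have h2 : (n : ℝ) ≤ Real.exp (lam * s) := by
              calc (n : ℝ) = Real.exp (Real.log (n : ℝ)) :=
                    (Real.exp_log (by linarith)).symm
                _ ≤ Real.exp (lam * s) := by
                    apply Real.exp_le_exp.mpr
                    have h3 := (div_le_iff₀ hlam).mp hs'
                    nlinarith
            exact le_trans hz.2 h2
          calc (⊤ : ℝ≥0∞) = Bn n := hBnn.symm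
            _ ≤ ∫⁻ z in S2 ∩ {z | a z ≤ (n:ℝ)}, ENNReal.ofReal (a z ^ 2) ∂μ := by
                refine setLIntegral_mono ((hma.pow_const 2).ennreal_ofReal) fun z hz => ?_
                refine ENNReal.ofReal_le_ofReal ?_
                have h1z : 1 < a z := hz.1
                nlinarith
            _ ≤ _ := lintegral_mono' (Measure.restrict_mono hsub (le_refl _)) (le_refl _)
        calc (⊤ : ℝ≥0∞) = ∫⁻ s in Set.Ici sn, (⊤ : ℝ≥0∞) := by
              rw [setLIntegral_const, Real.volume_Ici, ENNReal.top_mul_top]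
          _ = ∫⁻ s in Set.Ici sn, ENNReal.ofReal (Real.exp (-lam * s)) *
                ∫⁻ z in {z : Fin d → ℝ | a z ≤ Real.exp (lam * s)},
                  ENNReal.ofReal (a z ^ 2) ∂μ := by
              refine setLIntegral_congr_fun_ae measurableSet_Ici
                (Filter.Eventually.of_forall fun s hs => ?_)
              rw [hinner s hs, ENNReal.mul_top (ENNReal.ofReal_pos.mpr (Real.exp_pos _)).ne']
          _ ≤ L := lintegral_mono' (Measure.restrict_mono (Set.Ici_subset_Ici.mpr hsn0)
              (le_refl _)) (le_refl _)
    · -- finite case: split μ along S1 and use the aux lemma on the finite part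
      set μ2 : Measure (Fin d → ℝ) := μ.restrict S2 with hμ2
      have hμ2fin : IsFiniteMeasure μ2 := by
        constructor
        rw [hμ2, Measure.restrict_apply_univ, ← setLIntegral_one]
        calc (∫⁻ _ in S2, 1 ∂μ) ≤ ∫⁻ z in S2, ENNReal.ofReal (a z) ∂μ := by
              refine setLIntegral_mono hma.ennreal_ofReal fun z hz => ?_
              exact ENNReal.one_le_ofReal.mpr hz.le
          _ < ⊤ := lt_top_iff_ne_top.mpr hBfin
      have hdecomp : ∀ s ∈ Set.Ici (0:ℝ),
          ENNReal.ofReal (Real.exp (-lam * s)) *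
            (∫⁻ z in {z : Fin d → ℝ | a z ≤ Real.exp (lam * s)},
              ENNReal.ofReal (a z ^ 2) ∂μ) =
          ENNReal.ofReal (Real.exp (-lam * s)) * A +
            ENNReal.ofReal (Real.exp (-lam * s)) *
              ∫⁻ z in {z : Fin d → ℝ | a z ≤ Real.exp (lam * s)},
                ENNReal.ofReal (a z ^ 2) ∂μ2 := by
        intro s hs
        rw [← mul_add]
        congr 1
        have hsub : S1 ⊆ {z : Fin d → ℝ | a z ≤ Real.exp (lam * s)} := by
          intro z hz
          exact le_trans hz (Real.one_le_exp (mul_nonneg hlam.le hs))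
        conv_lhs => rw [← Measure.restrict_add_restrict_compl (μ := μ) hS1, hcompl]
        rw [Measure.restrict_add, lintegral_add_measure]
        congr 1
        rw [Measure.restrict_restrict (measurableSet_le hma measurable_const),
          Set.inter_eq_right.mpr hsub]
      rw [hL, setLIntegral_congr_fun_ae measurableSet_Ici (Filter.Eventually.of_forall hdecomp),
        lintegral_add_left (hme.mul_const A), lintegral_mul_const _ hme, key_exp lam 0 hlam,
        hofReal1]
      have haux := smalljump_aux μ2 lam hlam
      have hAν : (∫⁻ z in {z : Fin d → ℝ | (∑ j, z j) ≤ 1},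
          ENNReal.ofReal ((∑ j, z j) ^ 2) ∂μ2) = 0 := by
        rw [hμ2, Measure.restrict_restrict hS1]
        have : S1 ∩ S2 = ∅ := by
          ext z
          simp only [hS1def, hS2def, Set.mem_inter_iff, Set.mem_setOf_eq,
            Set.mem_empty_iff_false, iff_false, not_and]
          intro h1
          linarith
        rw [this]
        simp
      have hBν : (∫⁻ z in {z : Fin d → ℝ | 1 < (∑ j, z j)},
          ENNReal.ofReal (∑ j, z j) ∂μ2) = B := by
        rw [hμ2, Measure.restrict_restrict hS2, Set.inter_self]
      rw [hAν, hBν, zero_add] at haux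
      rw [haux]
      ring
  refine ⟨main, fun hfin => ?_⟩
  rw [main]
  exact ENNReal.mul_lt_top ENNReal.ofReal_lt_top (ENNReal.add_lt_top.mpr hfin)
end
end

section
/- For every λ > 0, in the extended nonnegative reals: ∫_0^∞ ∫_{ℝ₊^d} u e^{−λ u} ⟨1,z⟩² 1_{{⟨1,z⟩ ≤ e^{λ u}}} μ(dz) du = (1/λ²) ( ∫_{{⟨1,z⟩ ≤ 1}} ⟨1,z⟩² μ(dz) + ∫_{{⟨1,z⟩ > 1}} ⟨1,z⟩ ( ln⟨1,z⟩ + 1 ) μ(dz) ). In particular, the left-hand side is finite whenever ∫_{{⟨1,z⟩ ≤ 1}} ⟨1,z⟩² μ(dz) < ∞ and ∫_{{⟨1,z⟩ > 1}} ⟨1,z⟩ ln⟨1,z⟩ μ(dz) < ∞ and ∫_{{⟨1,z⟩ > 1}} ⟨1,z⟩ μ(dz) < ∞. -/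
open MeasureTheory Filter Topology
open scoped ENNReal
open Set

noncomputable section

private lemma lintegral_image_eq_lintegral_abs_deriv_mul' {s : Set ℝ} {f : ℝ → ℝ} {f' : ℝ → ℝ}
    (hs : MeasurableSet s) (hf' : ∀ x ∈ s, HasDerivWithinAt f (f' x) s x) (hf : Set.InjOn f s)
    (g : ℝ → ℝ≥0∞) :
    ∫⁻ x in f '' s, g x = ∫⁻ x in s, ENNReal.ofReal |f' x| * g (f x) := by
  simpa only [ContinuousLinearMap.det_toSpanSingleton] using
    MeasureTheory.lintegral_image_eq_lintegral_abs_det_fderiv_mul volume hs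
      (fun x hx => (hf' x hx).hasFDerivWithinAt) hf g

private lemma main_calc {α : Type*} [MeasurableSpace α] (μ : Measure α) (S : α → ℝ)
    (hS : Measurable S) (lam : ℝ) (hlam : 0 < lam) :
    (∫⁻ u in Set.Ici (0 : ℝ),
        ∫⁻ z in {z | S z ≤ Real.exp (lam * u)},
          ENNReal.ofReal (u * Real.exp (-lam * u) * (S z) ^ 2) ∂μ) =
      ENNReal.ofReal (1 / lam ^ 2) *
        ((∫⁻ z in {z | S z ≤ 1}, ENNReal.ofReal ((S z) ^ 2) ∂μ) +
          ∫⁻ z in {z | 1 < S z}, ENNReal.ofReal ((S z) * (Real.log (S z) + 1)) ∂μ) := by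
  have hlam2 : (0:ℝ) < lam ^ 2 := by positivity
  set c : ℝ := 1 / lam ^ 2 with hc
  have hc0 : 0 < c := by positivity
  set ψ : ℝ → ℝ := fun u => Real.exp (-lam * u) * (lam * u + 1) / lam ^ 2 with hψ
  have hψderiv : ∀ x : ℝ, HasDerivAt ψ (-(x * Real.exp (-lam * x))) x := by
    intro x
    have h1 : HasDerivAt (fun u : ℝ => -lam * u) (-lam) x := by
      simpa using (hasDerivAt_id x).const_mul (-lam)
    have h2 : HasDerivAt (fun u : ℝ => Real.exp (-lam * u)) (Real.exp (-lam * x) * -lam) x :=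
      (Real.hasDerivAt_exp (-lam * x)).comp x h1
    have h3 : HasDerivAt (fun u : ℝ => lam * u + 1) lam x := by
      simpa using ((hasDerivAt_id x).const_mul lam).add_const 1
    have h4 := (h2.mul h3).div_const (lam ^ 2)
    have h5 : -(x * Real.exp (-lam * x)) = (Real.exp (-lam * x) * -lam * (lam * x + 1) + Real.exp (-lam * x) * lam) / lam ^ 2 := by
      rw [eq_div_iff (by positivity)]
      ring
    rw [h5]
    exact h4
  have hψcont : Continuous ψ := by fun_prop
  have hψ0 : ψ 0 = c := by simp [hψ, hc]
  have hψanti : StrictAntiOn ψ (Set.Ici 0) := by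
    apply strictAntiOn_of_deriv_neg (convex_Ici 0) hψcont.continuousOn
    intro x hx
    rw [interior_Ici] at hx
    rw [(hψderiv x).deriv]
    have hx0 : (0:ℝ) < x := hx
    have : 0 < x * Real.exp (-lam * x) := by positivity
    linarith
  have hψpos : ∀ x : ℝ, 0 ≤ x → 0 < ψ x := by
    intro x hx
    have h1 : 0 < lam * x + 1 := by nlinarith
    exact div_pos (mul_pos (Real.exp_pos _) h1) hlam2
  have hψtend : Tendsto ψ atTop (𝓝 0) := by
    have h1 : Tendsto (fun u : ℝ => lam * u) atTop atTop :=
      Tendsto.const_mul_atTop hlam tendsto_id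
    have h2 : Tendsto (fun x : ℝ => x * Real.exp (-x)) atTop (𝓝 0) := by
      simpa using Real.tendsto_pow_mul_exp_neg_atTop_nhds_zero 1
    have h3 : Tendsto (fun u : ℝ => (lam * u) * Real.exp (-(lam * u))) atTop (𝓝 0) := h2.comp h1
    have h4 : Tendsto (fun u : ℝ => Real.exp (-(lam * u))) atTop (𝓝 0) := by
      apply Real.tendsto_exp_atBot.comp
      simpa using tendsto_neg_atBot_iff.mpr h1
    have heq : ψ = fun u => ((lam * u) * Real.exp (-(lam * u)) + Real.exp (-(lam * u))) / lam ^ 2 := by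
      funext u
      simp only [hψ, neg_mul]
      ring
    rw [heq]
    have := (h3.add h4).div_const (lam ^ 2)
    simpa using this
  have hψimg : ψ '' (Set.Ioi 0) = Set.Ioo 0 c := by
    ext t
    constructor
    · rintro ⟨u, hu, rfl⟩
      exact ⟨hψpos u (le_of_lt hu), hψ0 ▸ hψanti Set.self_mem_Ici (Set.mem_Ici.mpr (le_of_lt hu)) hu⟩
    · rintro ⟨ht0, htc⟩
      obtain ⟨u₀, hu₀t, hu₀0⟩ : ∃ u₀ : ℝ, ψ u₀ < t ∧ 0 ≤ u₀ := by
        have hev : ∀ᶠ u in atTop, ψ u < t := hψtend.eventually_lt_const ht0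
        exact (hev.and (eventually_ge_atTop 0)).exists
      have hmem : t ∈ Set.Icc (ψ u₀) (ψ 0) := ⟨le_of_lt hu₀t, by rw [hψ0]; exact le_of_lt htc⟩
      obtain ⟨x, hx, hxt⟩ := intermediate_value_Icc' hu₀0 hψcont.continuousOn hmem
      refine ⟨x, ?_, hxt⟩
      rcases eq_or_lt_of_le hx.1 with h | h
      · exfalso
        rw [← h, hψ0] at hxt
        linarith
      · exact h
  set ν : Measure α := μ.withDensity (fun z => ENNReal.ofReal ((S z) ^ 2)) with hν
  set f : α → ℝ := fun z => if S z ≤ 1 then c else (Real.log (S z) + 1) / (S z * lam ^ 2) with hf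
  have hfm : Measurable f := by
    apply Measurable.ite (measurableSet_le hS measurable_const) measurable_const
    exact ((Real.measurable_log.comp hS).add measurable_const).div (hS.mul measurable_const)
  have hfnn : ∀ z, 0 ≤ f z := by
    intro z
    simp only [hf]
    split_ifs with h
    · exact le_of_lt hc0
    · have h1 : 1 < S z := not_le.mp h
      have h2 : 0 < S z := lt_trans one_pos h1
      have h3 : 0 ≤ Real.log (S z) := Real.log_nonneg (le_of_lt h1)
      positivity
  have hfle : ∀ z, f z ≤ c := by
    intro z
    simp only [hf]
    split_ifs with h
    · exact le_rfl
    · have h1 : 1 < S z := not_le.mp h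
      have h2 : 0 < S z := lt_trans one_pos h1
      rw [hc, div_le_div_iff₀ (by positivity) hlam2]
      nlinarith [Real.log_le_sub_one_of_pos h2]
  have hBu : ∀ r : ℝ, MeasurableSet {z | S z ≤ r} := fun r => measurableSet_le hS measurable_const
  have hmono2 : Measurable fun z => ENNReal.ofReal ((S z) ^ 2) := (hS.pow_const 2).ennreal_ofReal
  -- Step E1
  have E1 : (∫⁻ u in Set.Ici (0 : ℝ),
        ∫⁻ z in {z | S z ≤ Real.exp (lam * u)},
          ENNReal.ofReal (u * Real.exp (-lam * u) * (S z) ^ 2) ∂μ) =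
      ∫⁻ u in Set.Ioi (0:ℝ),
        ENNReal.ofReal (u * Real.exp (-lam * u)) * ν {z | S z ≤ Real.exp (lam * u)} := by
    rw [← Measure.restrict_congr_set Ioi_ae_eq_Ici]
    apply setLIntegral_congr_fun measurableSet_Ioi
    intro u hu
    have hu0 : (0:ℝ) < u := hu
    have hnn : 0 ≤ u * Real.exp (-lam * u) := by positivity
    calc ∫⁻ z in {z | S z ≤ Real.exp (lam * u)},
          ENNReal.ofReal (u * Real.exp (-lam * u) * (S z) ^ 2) ∂μ
        = ∫⁻ z in {z | S z ≤ Real.exp (lam * u)},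
            ENNReal.ofReal (u * Real.exp (-lam * u)) * ENNReal.ofReal ((S z) ^ 2) ∂μ := by
          simp only [ENNReal.ofReal_mul hnn]
      _ = ENNReal.ofReal (u * Real.exp (-lam * u)) *
            ∫⁻ z in {z | S z ≤ Real.exp (lam * u)}, ENNReal.ofReal ((S z) ^ 2) ∂μ :=
          lintegral_const_mul _ hmono2
      _ = ENNReal.ofReal (u * Real.exp (-lam * u)) * ν {z | S z ≤ Real.exp (lam * u)} := by
          rw [withDensity_apply _ (hBu _)]
  -- Step E2 : substitution
  have E2 : (∫⁻ t in Set.Ioo 0 c, ν {z | t ≤ f z}) =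
      ∫⁻ u in Set.Ioi (0:ℝ),
        ENNReal.ofReal (u * Real.exp (-lam * u)) * ν {z | S z ≤ Real.exp (lam * u)} := by
    have hder : ∀ x ∈ Set.Ioi (0:ℝ),
        HasDerivWithinAt ψ (-(x * Real.exp (-lam * x))) (Set.Ioi 0) x :=
      fun x _ => (hψderiv x).hasDerivWithinAt
    have hinj : Set.InjOn ψ (Set.Ioi 0) := hψanti.injOn.mono Set.Ioi_subset_Ici_self
    rw [← hψimg, lintegral_image_eq_lintegral_abs_deriv_mul' measurableSet_Ioi hder hinj
      (fun t => ν {z | t ≤ f z})]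
    apply setLIntegral_congr_fun measurableSet_Ioi
    intro u hu
    have hu0 : (0:ℝ) < u := hu
    have habs : |(-(u * Real.exp (-lam * u)))| = u * Real.exp (-lam * u) := by
      rw [abs_neg, abs_of_nonneg (by positivity)]
    beta_reduce
    rw [habs]
    congr 2
    ext z
    simp only [Set.mem_setOf_eq]
    by_cases h : S z ≤ 1
    · have hl : ψ u ≤ f z := by
        rw [hf]
        simp only [if_pos h]
        exact le_of_lt (hψ0 ▸ hψanti Set.self_mem_Ici (le_of_lt hu0) hu0)
      have hr : S z ≤ Real.exp (lam * u) := le_trans h (Real.one_le_exp (by positivity))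
      exact iff_of_true hl hr
    · have h1 : 1 < S z := not_le.mp h
      have h2 : 0 < S z := lt_trans one_pos h1
      have hfz : f z = ψ (Real.log (S z) / lam) := by
        rw [hf]
        simp only [if_neg h, hψ]
        have harg : -lam * (Real.log (S z) / lam) = -Real.log (S z) := by
          field_simp
        rw [harg, Real.exp_neg, Real.exp_log h2]
        field_simp
      have hlogpos : 0 < Real.log (S z) := Real.log_pos h1
      have ha : 0 < Real.log (S z) / lam := div_pos hlogpos hlam
      rw [hfz]
      have hiff1 : ψ u ≤ ψ (Real.log (S z) / lam) ↔ Real.log (S z) / lam ≤ u := by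
        constructor
        · intro hle
          by_contra hc'
          push_neg at hc'
          have := hψanti (le_of_lt hu0) (le_of_lt ha) hc'
          linarith
        · intro hle
          exact hψanti.antitoneOn (le_of_lt ha) (le_of_lt hu0) hle
      rw [hiff1, div_le_iff₀ hlam, mul_comm]
      exact Real.log_le_iff_le_exp h2
  -- Step E3
  have E3 : (∫⁻ t in Set.Ioi (0:ℝ), ν {z | t ≤ f z}) = ∫⁻ t in Set.Ioo 0 c, ν {z | t ≤ f z} := by
    rw [← Set.Ioo_union_Ici_eq_Ioi hc0,
      lintegral_union measurableSet_Ici (Set.disjoint_left.mpr fun x hx hx' => absurd hx.2 (not_lt.mpr hx'))]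
    have hzero : (∫⁻ t in Set.Ici c, ν {z | t ≤ f z}) = 0 := by
      rw [← Measure.restrict_congr_set Ioi_ae_eq_Ici]
      have : ∀ t ∈ Set.Ioi c, ν {z | t ≤ f z} = (fun _ => (0:ℝ≥0∞)) t := by
        intro t ht
        have : {z | t ≤ f z} = (∅ : Set α) := by
          ext z
          simp only [Set.mem_setOf_eq, Set.mem_empty_iff_false, iff_false, not_le]
          exact lt_of_le_of_lt (hfle z) ht
        simp [this]
      rw [setLIntegral_congr_fun measurableSet_Ioi this]
      simp
    rw [hzero, add_zero]
  -- Step E4 : layer cake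
  have E4 : (∫⁻ z, ENNReal.ofReal (f z) ∂ν) = ∫⁻ t in Set.Ioi (0:ℝ), ν {z | t ≤ f z} :=
    lintegral_eq_lintegral_meas_le ν (ae_of_all _ hfnn) hfm.aemeasurable
  -- Step E5
  have E5 : (∫⁻ z, ENNReal.ofReal (f z) ∂ν) =
      ∫⁻ z, ENNReal.ofReal ((S z) ^ 2) * ENNReal.ofReal (f z) ∂μ := by
    rw [hν, lintegral_withDensity_eq_lintegral_mul μ hmono2 hfm.ennreal_ofReal]
    simp [Pi.mul_apply]
  -- Step E6
  have hcompl : {z | S z ≤ 1}ᶜ = {z | 1 < S z} := by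
    ext z; simp [not_le]
  have E6 : (∫⁻ z, ENNReal.ofReal ((S z) ^ 2) * ENNReal.ofReal (f z) ∂μ) =
      ENNReal.ofReal c *
        ((∫⁻ z in {z | S z ≤ 1}, ENNReal.ofReal ((S z) ^ 2) ∂μ) +
          ∫⁻ z in {z | 1 < S z}, ENNReal.ofReal ((S z) * (Real.log (S z) + 1)) ∂μ) := by
    rw [← lintegral_add_compl _ (hBu 1), hcompl]
    have hpt1 : ∀ᵐ z ∂μ, z ∈ {z | S z ≤ 1} →
        ENNReal.ofReal ((S z) ^ 2) * ENNReal.ofReal (f z) =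
          ENNReal.ofReal c * ENNReal.ofReal ((S z) ^ 2) := by
      apply ae_of_all
      intro z hz
      have hz' : S z ≤ 1 := hz
      rw [hf]
      simp only [if_pos hz']
      rw [mul_comm]
    have h1 : (∫⁻ z in {z | S z ≤ 1}, ENNReal.ofReal ((S z) ^ 2) * ENNReal.ofReal (f z) ∂μ) =
        ENNReal.ofReal c * ∫⁻ z in {z | S z ≤ 1}, ENNReal.ofReal ((S z) ^ 2) ∂μ := by
      rw [setLIntegral_congr_fun_ae (hBu 1) hpt1, lintegral_const_mul _ hmono2]
    have hset2 : MeasurableSet {z | 1 < S z} := by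
      rw [← hcompl]; exact (hBu 1).compl
    have hpt2 : ∀ᵐ z ∂μ, z ∈ {z | 1 < S z} →
        ENNReal.ofReal ((S z) ^ 2) * ENNReal.ofReal (f z) =
          ENNReal.ofReal c * ENNReal.ofReal ((S z) * (Real.log (S z) + 1)) := by
      apply ae_of_all
      intro z hz
      have hz1 : 1 < S z := hz
      have hz0 : 0 < S z := lt_trans one_pos hz1
      rw [hf]
      simp only [if_neg (not_le.mpr hz1)]
      rw [← ENNReal.ofReal_mul (sq_nonneg _), ← ENNReal.ofReal_mul (le_of_lt hc0)]
      congr 1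
      rw [hc]
      field_simp
    have h2 : (∫⁻ z in {z | 1 < S z}, ENNReal.ofReal ((S z) ^ 2) * ENNReal.ofReal (f z) ∂μ) =
        ENNReal.ofReal c *
          ∫⁻ z in {z | 1 < S z}, ENNReal.ofReal ((S z) * (Real.log (S z) + 1)) ∂μ := by
      rw [setLIntegral_congr_fun_ae hset2 hpt2,
        lintegral_const_mul' _ _ ENNReal.ofReal_ne_top]
    rw [h1, h2, mul_add]
  rw [E1, ← E2, ← E3, ← E4, E5, E6]

/-- **Weighted small-jump integral computation (Kyprianou–Palau–Ren, proof of Lemma 1).**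
For a measure `μ` carried by `ℝ₊^d` and `λ > 0`,
`∫_0^∞ ∫ u e^{-λu} ⟨1,z⟩² 1_{⟨1,z⟩ ≤ e^{λu}} μ(dz) du
  = (1/λ²)(∫_{⟨1,z⟩ ≤ 1} ⟨1,z⟩² μ(dz) + ∫_{⟨1,z⟩ > 1} ⟨1,z⟩ (ln⟨1,z⟩ + 1) μ(dz))`
in `[0,∞]`. -/
theorem weighted_smalljump_integral_eq
    {d : ℕ} (hd : 0 < d) (μ : Measure (Fin d → ℝ))
    (hμ : μ {z | ¬ ∀ i, 0 ≤ z i} = 0)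
    (lam : ℝ) (hlam : 0 < lam) :
    (∫⁻ u in Set.Ici (0 : ℝ),
        ∫⁻ z in {z : Fin d → ℝ | (∑ j, z j) ≤ Real.exp (lam * u)},
          ENNReal.ofReal (u * Real.exp (-lam * u) * (∑ j, z j) ^ 2) ∂μ) =
      ENNReal.ofReal (1 / lam ^ 2) *
        ((∫⁻ z in {z : Fin d → ℝ | (∑ j, z j) ≤ 1}, ENNReal.ofReal ((∑ j, z j) ^ 2) ∂μ) +
          ∫⁻ z in {z : Fin d → ℝ | 1 < ∑ j, z j},
            ENNReal.ofReal ((∑ j, z j) * (Real.log (∑ j, z j) + 1)) ∂μ) ∧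
    (((∫⁻ z in {z : Fin d → ℝ | (∑ j, z j) ≤ 1}, ENNReal.ofReal ((∑ j, z j) ^ 2) ∂μ) < ⊤ ∧
        (∫⁻ z in {z : Fin d → ℝ | 1 < ∑ j, z j},
          ENNReal.ofReal ((∑ j, z j) * Real.log (∑ j, z j)) ∂μ) < ⊤ ∧
        (∫⁻ z in {z : Fin d → ℝ | 1 < ∑ j, z j}, ENNReal.ofReal (∑ j, z j) ∂μ) < ⊤) →
      (∫⁻ u in Set.Ici (0 : ℝ),
        ∫⁻ z in {z : Fin d → ℝ | (∑ j, z j) ≤ Real.exp (lam * u)},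
          ENNReal.ofReal (u * Real.exp (-lam * u) * (∑ j, z j) ^ 2) ∂μ) < ⊤) := by
  have hS : Measurable (fun z : Fin d → ℝ => ∑ j, z j) :=
    Finset.measurable_sum Finset.univ (fun j _ => measurable_pi_apply j)
  have key := main_calc μ (fun z => ∑ j, z j) hS lam hlam
  refine ⟨key, ?_⟩
  rintro ⟨h1, h2, h3⟩
  rw [key]
  have hset2 : MeasurableSet {z : Fin d → ℝ | 1 < ∑ j, z j} := by
    have heq : {z : Fin d → ℝ | 1 < ∑ j, z j} = {z : Fin d → ℝ | (∑ j, z j) ≤ 1}ᶜ := by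
      ext z; simp [not_le]
    rw [heq]; exact (measurableSet_le hS measurable_const).compl
  have hsplit : (∫⁻ z in {z : Fin d → ℝ | 1 < ∑ j, z j},
        ENNReal.ofReal ((∑ j, z j) * (Real.log (∑ j, z j) + 1)) ∂μ)
      = (∫⁻ z in {z : Fin d → ℝ | 1 < ∑ j, z j},
          ENNReal.ofReal ((∑ j, z j) * Real.log (∑ j, z j)) ∂μ)
        + ∫⁻ z in {z : Fin d → ℝ | 1 < ∑ j, z j}, ENNReal.ofReal (∑ j, z j) ∂μ := by
    have hpt : ∀ᵐ z ∂μ, z ∈ {z : Fin d → ℝ | 1 < ∑ j, z j} →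
        ENNReal.ofReal ((∑ j, z j) * (Real.log (∑ j, z j) + 1)) =
          ENNReal.ofReal ((∑ j, z j) * Real.log (∑ j, z j)) + ENNReal.ofReal (∑ j, z j) := by
      apply ae_of_all
      intro z hz
      have hz1 : (1:ℝ) < ∑ j, z j := hz
      have hz0 : (0:ℝ) ≤ ∑ j, z j := by linarith
      have hl : 0 ≤ Real.log (∑ j, z j) := Real.log_nonneg hz1.le
      rw [mul_add, mul_one, ENNReal.ofReal_add (mul_nonneg hz0 hl) hz0]
    rw [setLIntegral_congr_fun_ae hset2 hpt]
    exact lintegral_add_left ((hS.mul hS.log).ennreal_ofReal) _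
  rw [hsplit]
  exact ENNReal.mul_lt_top ENNReal.ofReal_lt_top
    (ENNReal.add_lt_top.mpr ⟨h1, ENNReal.add_lt_top.mpr ⟨h2, h3⟩⟩)
end
end

section
/- (Interpolation from lattice to continuous times.) Suppose λ₁ > 0. Then for every x ∈ ℝ₊^d and every k ∈ E, ℙ_x-almost surely: lim_{σ→0⁺} limsup_{n→∞} sup_{t ∈ [nσ, (n+1)σ]} e^{−λ₁ t} | ⟨ ( M((n+1)σ − t) − I ) e_k , X_t ⟩ | = 0, where I is the d×d identity matrix. (This follows from the bound |⟨a, X_t⟩| ≤ (‖a‖/min_i φ(i)) ⟨φ, X_t⟩ for a ∈ ℝ^d, the ℙ_x-a.s. convergence — hence boundedness — of W_t = e^{−λ₁ t}⟨φ, X_t⟩, and the continuity of t ↦ M(t) = e^{tBᵀ} at t = 0.) -/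
open MeasureTheory Filter Topology
open scoped NNReal ENNReal

noncomputable section

/-- The Euclidean inner product on `Fin d → ℝ`. -/
def dotp {d : ℕ} (x y : Fin d → ℝ) : ℝ := ∑ i, x i * y i

/-- The branching mechanism `ψ` of a multi-type continuous-state branching process:
`ψ i u = -⟨u, B eᵢ⟩ + cᵢ uᵢ² + ∫ (e^{-⟨u,z⟩} - 1 + ⟨u,z⟩) μᵢ(dz)`. -/
def psi {d : ℕ} (c : Fin d → ℝ) (μ : Fin d → Measure (Fin d → ℝ))
    (B : Matrix (Fin d) (Fin d) ℝ) (i : Fin d) (u : Fin d → ℝ) : ℝ :=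
  -(dotp u fun j => B j i) + c i * u i ^ 2 +
    (∫⁻ z, ENNReal.ofReal (Real.exp (-dotp u z) - 1 + dotp u z) ∂μ i).toReal

private lemma matexp_cont {d : ℕ} (A : Matrix (Fin d) (Fin d) ℝ) :
    Continuous fun r : ℝ => NormedSpace.exp (r • A) := by
  letI : SeminormedRing (Matrix (Fin d) (Fin d) ℝ) := Matrix.linftyOpSemiNormedRing
  letI : NormedRing (Matrix (Fin d) (Fin d) ℝ) := Matrix.linftyOpNormedRing
  letI : NormedAlgebra ℝ (Matrix (Fin d) (Fin d) ℝ) := Matrix.linftyOpNormedAlgebra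
  letI : NormedAlgebra ℚ (Matrix (Fin d) (Fin d) ℝ) := NormedAlgebra.restrictScalars ℚ ℝ _
  haveI : CompleteSpace (Matrix (Fin d) (Fin d) ℝ) :=
    FiniteDimensional.complete ℝ (Matrix (Fin d) (Fin d) ℝ)
  exact NormedSpace.exp_continuous.comp (continuous_id.smul continuous_const)

/-- **Interpolation from lattice to continuous times (Kyprianou–Palau–Ren, Section 3.2).**
If `λ₁ > 0`, then ℙₓ-a.s., for each coordinate `k`,
`lim_{σ→0⁺} limsup_{n→∞} sup_{t ∈ [nσ,(n+1)σ]} e^{-λ₁ t} |⟨(M((n+1)σ-t) - I)e_k, X_t⟩| = 0`. -/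
theorem mcsbp_lattice_to_continuous
    -- dimension
    {d : ℕ} (hd : 0 < d)
    -- branching data: diffusion coefficients, jump measures, linear part
    (c : Fin d → ℝ) (hc : ∀ i, 0 ≤ c i)
    (μ : Fin d → Measure (Fin d → ℝ))
    (hμsupp : ∀ i, μ i {z | ¬ ((∀ j, 0 ≤ z j) ∧ z ≠ 0)} = 0)
    (hμint : ∀ i, (∫⁻ z, ENNReal.ofReal
        (min ‖z‖ (‖z‖ ^ 2) + ∑ j, if j = i then 0 else z j) ∂μ i) < ⊤)
    (B : Matrix (Fin d) (Fin d) ℝ)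
    (hB : ∀ i j, i ≠ j → (∫⁻ z, ENNReal.ofReal (z i) ∂μ j) ≤ ENNReal.ofReal (B i j))
    -- the log-Laplace functional `v(t,f)`
    (v : ℝ≥0 → (Fin d → ℝ) → Fin d → ℝ)
    (hv_nonneg : ∀ (f : Fin d → ℝ), (∀ i, 0 ≤ f i) → ∀ t i, 0 ≤ v t f i)
    (hv_bdd : ∀ (f : Fin d → ℝ) (T : ℝ≥0), ∃ C : ℝ, ∀ t ≤ T, ∀ i, v t f i ≤ C)
    (hv_eq : ∀ (f : Fin d → ℝ), (∀ i, 0 ≤ f i) → ∀ (t : ℝ≥0) (i : Fin d),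
      v t f i = f i - ∫ s in (0:ℝ)..(t:ℝ), psi c μ B i (v (Real.toNNReal s) f))
    -- the ψ-MCSBP `X` started from `x`, on a filtered probability space
    {Ω : Type*} {m0 : MeasurableSpace Ω} (P : Measure Ω) [IsProbabilityMeasure P]
    (F : Filtration ℝ≥0 m0)
    (X : ℝ≥0 → Ω → Fin d → ℝ)
    (hX_adapted : Adapted F X)
    (hX_rc : ∀ ω (t : ℝ≥0), ContinuousWithinAt (fun s => X s ω) (Set.Ici t) t)
    (hX_ll : ∀ ω (t : ℝ≥0), 0 < t → ∃ l, Tendsto (fun s => X s ω) (𝓝[<] t) (𝓝 l))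
    (hX_nonneg : ∀ t, ∀ᵐ ω ∂P, ∀ i, 0 ≤ X t ω i)
    (x : Fin d → ℝ) (hx : ∀ i, 0 ≤ x i)
    (hX0 : ∀ᵐ ω ∂P, X 0 ω = x)
    -- Markov property through the Laplace functional
    (hMarkov : ∀ (t s : ℝ≥0) (f : Fin d → ℝ), (∀ i, 0 ≤ f i) →
      P[(fun ω => Real.exp (-dotp f (X (t + s) ω))) | F t]
        =ᵐ[P] fun ω => Real.exp (-dotp (X t ω) (v s f)))
    -- the first-moment semigroup `M(t) = e^{tBᵀ}`
    (M : ℝ≥0 → Matrix (Fin d) (Fin d) ℝ)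
    (hM : ∀ t : ℝ≥0, M t = NormedSpace.exp ((t : ℝ) • B.transpose))
    (hMoment : ∀ (t s : ℝ≥0) (f : Fin d → ℝ),
      P[(fun ω => dotp f (X (t + s) ω)) | F t] =ᵐ[P] fun ω => dotp ((M s).mulVec f) (X t ω))
    -- irreducibility and Perron–Frobenius data
    (hirr : ∃ t₀ : ℝ≥0, 0 < t₀ ∧ ∀ i j, 0 < M t₀ i j)
    (lam : ℝ) (φ φh : Fin d → ℝ)
    (hφpos : ∀ i, 0 < φ i) (hφhpos : ∀ i, 0 < φh i)
    (hφ : ∀ t : ℝ≥0, (M t).mulVec φ = Real.exp (lam * t) • φ)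
    (hφh : ∀ t : ℝ≥0, (M t).transpose.mulVec φh = Real.exp (lam * t) • φh)
    (hnorm1 : dotp φ (fun _ => 1) = 1) (hnorm2 : dotp φ φh = 1)
    -- the additive martingale `W`
    (W : ℝ≥0 → Ω → ℝ) (hW : ∀ t ω, W t ω = Real.exp (-lam * t) * dotp φ (X t ω))
    (hWmart : Martingale W F P) (hWnonneg : ∀ t, 0 ≤ᵐ[P] W t)
    (Winf : Ω → ℝ)
    (hWinf : ∀ᵐ ω ∂P, Tendsto (fun t : ℝ≥0 => W t ω) atTop (𝓝 (Winf ω)))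
    (hsup : 0 < lam) :
    ∀ᵐ ω ∂P, ∀ k : Fin d,
      Tendsto (fun σ : ℝ≥0 =>
          Filter.limsup (fun n : ℕ =>
              ⨆ t ∈ Set.Icc ((n : ℝ≥0) * σ) (((n : ℝ≥0) + 1) * σ),
                Real.exp (-lam * (t : ℝ)) *
                  |dotp ((M (((n : ℝ≥0) + 1) * σ - t) - 1).mulVec (Pi.single k 1)) (X t ω)|)
            atTop)
        (𝓝[>] (0 : ℝ≥0)) (𝓝 (0 : ℝ)) := by
  
  classical
  have hE1 : ∀ᵐ ω ∂P, ∀ q : ℚ, ∀ i, 0 ≤ X (Real.toNNReal q) ω i := by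
    rw [MeasureTheory.ae_all_iff]
    exact fun q => hX_nonneg _
  filter_upwards [hE1, hWinf] with ω hnnQ hWlim
  -- nonnegativity of X at all times
  have hnn : ∀ (t : ℝ≥0) (i : Fin d), 0 ≤ X t ω i := by
    intro t i
    have hex : ∀ n : ℕ, ∃ q : ℚ, (t : ℝ) < q ∧ (q : ℝ) < (t : ℝ) + 1 / (n + 1) := by
      intro n
      refine exists_rat_btwn ?_
      have : (0:ℝ) < 1 / (n + 1) := by positivity
      linarith
    choose q hq1 hq2 using hex
    set u : ℕ → ℝ≥0 := fun n => Real.toNNReal (q n) with hu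
    have hqc : ∀ n, ((u n : ℝ≥0) : ℝ) = (q n : ℝ) := by
      intro n
      exact Real.coe_toNNReal _ (le_of_lt (lt_of_le_of_lt t.coe_nonneg (hq1 n)))
    have hutend : Tendsto u atTop (𝓝 t) := by
      rw [← NNReal.tendsto_coe]
      have h2 : Tendsto (fun n : ℕ => (t : ℝ) + 1 / (n + 1)) atTop (𝓝 ((t:ℝ) + 0)) :=
        tendsto_const_nhds.add tendsto_one_div_add_atTop_nhds_zero_nat
      rw [add_zero] at h2
      refine tendsto_of_tendsto_of_tendsto_of_le_of_le tendsto_const_nhds h2 ?_ ?_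
      · intro n
        show (t : ℝ) ≤ ((u n : ℝ≥0) : ℝ)
        rw [hqc n]; exact (hq1 n).le
      · intro n
        show ((u n : ℝ≥0) : ℝ) ≤ (t : ℝ) + 1 / (n + 1)
        rw [hqc n]; exact (hq2 n).le
    have humem : ∀ n, u n ∈ Set.Ici t := by
      intro n
      rw [Set.mem_Ici, ← NNReal.coe_le_coe, hqc n]
      exact (hq1 n).le
    have hXtend : Tendsto (fun n => X (u n) ω) atTop (𝓝 (X t ω)) :=
      (hX_rc ω t).tendsto.comp
        (tendsto_nhdsWithin_iff.mpr ⟨hutend, Filter.Eventually.of_forall humem⟩)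
    have hXtendi : Tendsto (fun n => X (u n) ω i) atTop (𝓝 (X t ω i)) :=
      ((continuous_apply i).tendsto _).comp hXtend
    exact ge_of_tendsto' hXtendi fun n => hnnQ (q n) i
  have hdotnn : ∀ t : ℝ≥0, 0 ≤ dotp φ (X t ω) := by
    intro t
    exact Finset.sum_nonneg fun i _ => mul_nonneg (hφpos i).le (hnn t i)
  have hWnn : ∀ t : ℝ≥0, 0 ≤ W t ω := by
    intro t
    rw [hW]
    exact mul_nonneg (Real.exp_nonneg _) (hdotnn t)
  have hWinfnn : 0 ≤ Winf ω := ge_of_tendsto' hWlim hWnn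
  -- eventual bound on W
  obtain ⟨T, hT⟩ : ∃ T : ℝ≥0, ∀ t ≥ T, W t ω ≤ Winf ω + 1 := by
    have := hWlim.eventually (eventually_le_nhds (lt_add_one (Winf ω)))
    exact eventually_atTop.mp this
  -- minimum of φ
  haveI : Nonempty (Fin d) := ⟨⟨0, hd⟩⟩
  set pm : ℝ := Finset.univ.inf' Finset.univ_nonempty φ with hpmdef
  have hpm : 0 < pm := by
    rw [hpmdef, Finset.lt_inf'_iff]
    exact fun i _ => hφpos i
  have hpmle : ∀ i, pm ≤ φ i := fun i => Finset.inf'_le _ (Finset.mem_univ i)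
  -- key inner-product bound
  have hkey : ∀ (a : Fin d → ℝ) (cc : ℝ), 0 ≤ cc → (∀ i, |a i| ≤ cc) → ∀ t : ℝ≥0,
      |dotp a (X t ω)| ≤ cc / pm * dotp φ (X t ω) := by
    intro a cc hcc ha t
    have hccpm : 0 ≤ cc / pm := div_nonneg hcc hpm.le
    calc |dotp a (X t ω)| ≤ ∑ i, |a i * X t ω i| := Finset.abs_sum_le_sum_abs _ _
      _ ≤ ∑ i, cc / pm * (φ i * X t ω i) := by
          refine Finset.sum_le_sum fun i _ => ?_
          rw [abs_mul, abs_of_nonneg (hnn t i)]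
          have h1 : |a i| * X t ω i ≤ cc * X t ω i :=
            mul_le_mul_of_nonneg_right (ha i) (hnn t i)
          have h2 : cc * X t ω i ≤ cc / pm * (φ i * X t ω i) := by
            have : cc / pm * pm * X t ω i ≤ cc / pm * φ i * X t ω i :=
              mul_le_mul_of_nonneg_right
                (mul_le_mul_of_nonneg_left (hpmle i) hccpm) (hnn t i)
            rw [div_mul_cancel₀ cc hpm.ne'] at this
            calc cc * X t ω i ≤ cc / pm * φ i * X t ω i := this
              _ = cc / pm * (φ i * X t ω i) := by ring
          exact h1.trans h2
      _ = cc / pm * dotp φ (X t ω) := by rw [dotp, Finset.mul_sum]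
  intro k
  -- the modulus function g
  set g : ℝ≥0 → ℝ := fun s => ∑ i, |((M s - 1).mulVec (Pi.single k 1)) i| with hgdef
  have hgnn : ∀ s, 0 ≤ g s := fun s => Finset.sum_nonneg fun i _ => abs_nonneg _
  have hgbd : ∀ s i, |((M s - 1).mulVec (Pi.single k 1)) i| ≤ g s := by
    intro s i
    exact Finset.single_le_sum (f := fun j => |((M s - 1).mulVec (Pi.single k 1)) j|)
      (fun j _ => abs_nonneg _) (Finset.mem_univ i)
  have hg0 : Tendsto g (𝓝 0) (𝓝 0) := by
    have hgeq : g = fun s : ℝ≥0 =>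
        ∑ i, |((NormedSpace.exp ((s : ℝ) • B.transpose) - 1).mulVec (Pi.single k 1)) i| := by
      funext s; rw [hgdef]; simp only [hM]
    have hcont : Continuous fun s : ℝ≥0 =>
        ∑ i, |((NormedSpace.exp ((s : ℝ) • B.transpose) - 1).mulVec (Pi.single k 1)) i| := by
      have hE : Continuous fun s : ℝ≥0 =>
          NormedSpace.exp ((s : ℝ) • B.transpose) - 1 :=
        ((matexp_cont B.transpose).comp NNReal.continuous_coe).sub continuous_const
      refine continuous_finset_sum _ fun i _ => ?_
      refine Continuous.abs ?_
      simp only [Matrix.mulVec, dotProduct]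
      refine continuous_finset_sum _ fun j _ => ?_
      exact (((continuous_apply j).comp ((continuous_apply i).comp hE))).mul continuous_const
    have hval : (∑ i, |((NormedSpace.exp (((0:ℝ≥0) : ℝ) • B.transpose) - 1).mulVec
        (Pi.single k 1)) i|) = 0 := by
      simp [NormedSpace.exp_zero]
    rw [hgeq]
    have := hcont.tendsto 0
    rwa [hval] at this
  -- main estimate
  rw [Metric.tendsto_nhds]
  intro ε hε
  set K : ℝ := Winf ω + 1 with hKdef
  have hK : 0 < K := by positivity
  set η : ℝ := ε / 2 * pm / K with hηdef
  have hη : 0 < η := by positivity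
  obtain ⟨δ, hδpos, hδ⟩ : ∃ δ : ℝ≥0, 0 < δ ∧ ∀ s : ℝ≥0, s < δ → g s < η := by
    have hev : ∀ᶠ s in 𝓝 (0 : ℝ≥0), g s < η := hg0.eventually (gt_mem_nhds hη)
    obtain ⟨δ, hδ1, hδ2⟩ := (NNReal.nhds_zero_basis.eventually_iff).mp hev
    exact ⟨δ, hδ1, fun s hs => hδ2 hs⟩
  have h1 : ∀ᶠ σ in 𝓝[>] (0 : ℝ≥0), σ < δ :=
    Filter.Eventually.filter_mono nhdsWithin_le_nhds (gt_mem_nhds hδpos)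
  have h2 : ∀ᶠ σ in 𝓝[>] (0 : ℝ≥0), 0 < σ := eventually_mem_nhdsWithin
  filter_upwards [h1, h2] with σ hσδ hσ0
  set A : ℕ → ℝ := fun n =>
    ⨆ t ∈ Set.Icc ((n : ℝ≥0) * σ) (((n : ℝ≥0) + 1) * σ),
      Real.exp (-lam * (t : ℝ)) *
        |dotp ((M (((n : ℝ≥0) + 1) * σ - t) - 1).mulVec (Pi.single k 1)) (X t ω)| with hAdef
  have hAnn : ∀ n, 0 ≤ A n := by
    intro n
    exact Real.iSup_nonneg fun t => Real.iSup_nonneg fun _ =>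
      mul_nonneg (Real.exp_nonneg _) (abs_nonneg _)
  obtain ⟨N, hN⟩ := exists_nat_ge (T / σ)
  have hbound : ∀ n ≥ N, A n ≤ ε / 2 := by
    intro n hn
    have hTn : T ≤ (n : ℝ≥0) * σ := by
      have : T / σ * σ ≤ (n : ℝ≥0) * σ :=
        mul_le_mul_of_nonneg_right (hN.trans (by exact_mod_cast Nat.cast_le.mpr hn)) zero_le
      rwa [div_mul_cancel₀ _ hσ0.ne'] at this
    refine Real.iSup_le (fun t => Real.iSup_le (fun ht => ?_) (by positivity)) (by positivity)
    set s : ℝ≥0 := ((n : ℝ≥0) + 1) * σ - t with hsdef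
    have hsσ : s ≤ σ := by
      rw [hsdef, tsub_le_iff_right]
      calc ((n : ℝ≥0) + 1) * σ = (n : ℝ≥0) * σ + σ := by ring
        _ ≤ t + σ := add_le_add_left ht.1 σ
        _ = σ + t := add_comm _ _
    have hgs : g s ≤ η := (hδ s (lt_of_le_of_lt hsσ hσδ)).le
    have habs : ∀ i, |((M s - 1).mulVec (Pi.single k 1)) i| ≤ g s := hgbd s
    have hdot : |dotp ((M s - 1).mulVec (Pi.single k 1)) (X t ω)| ≤
        g s / pm * dotp φ (X t ω) := hkey _ _ (hgnn s) habs t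
    have hWt : W t ω ≤ K := hT t (hTn.trans ht.1)
    calc Real.exp (-lam * (t : ℝ)) * |dotp ((M s - 1).mulVec (Pi.single k 1)) (X t ω)|
        ≤ Real.exp (-lam * (t : ℝ)) * (g s / pm * dotp φ (X t ω)) :=
          mul_le_mul_of_nonneg_left hdot (Real.exp_nonneg _)
      _ = g s / pm * (Real.exp (-lam * (t : ℝ)) * dotp φ (X t ω)) := by ring
      _ = g s / pm * W t ω := by rw [hW]
      _ ≤ g s / pm * K := mul_le_mul_of_nonneg_left hWt (div_nonneg (hgnn s) hpm.le)
      _ ≤ η / pm * K := by gcongr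
      _ = ε / 2 := by
          rw [hηdef]
          field_simp
  have hcob : Filter.IsCoboundedUnder (· ≤ ·) atTop A :=
    Filter.isCoboundedUnder_le_of_eventually_le atTop
      (Filter.Eventually.of_forall hAnn)
  have hup : Filter.limsup A atTop ≤ ε / 2 :=
    Filter.limsup_le_of_le hcob (eventually_atTop.mpr ⟨N, hbound⟩)
  have hbdd : Filter.IsBoundedUnder (· ≤ ·) atTop A :=
    ⟨ε / 2, eventually_map.mpr (eventually_atTop.mpr ⟨N, hbound⟩)⟩
  have hlo : (0 : ℝ) ≤ Filter.limsup A atTop :=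
    Filter.le_limsup_of_frequently_le
      ((Filter.Eventually.of_forall hAnn).frequently) hbdd
  rw [Real.dist_eq, sub_zero, abs_of_nonneg hlo]
  calc Filter.limsup A atTop ≤ ε / 2 := hup
    _ < ε := by linarith
end
end
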